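/- Let X be a complex Banach space, T a bounded linear operator on X, λ an eigenvalue of T, and p a positive integer. Assume (T − λI)^p has closed range and 0 < dim ker((T − λI)^p) = n ≤ m = dim ker((T* − λI)^p) < ∞ (i.e., T − λI is Fredholm of index ≤ 0). Let (e_1,…,e_n) be a basis of ker((T − λI)^p) and (e*_1,…,e*_m) a basis of ker((T* − λI)^p). Then ker((T − λI)^p) = ker((T − λI)^{p+1}) (i.e., T − λI has ascent at most p) if and only if the m×n Gram matrix G with entries G_{ji} = e*_j(e_i) has full column rank n. -/

import Mathlib

set_option maxHeartbeats 1000000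
set_option synthInstance.maxHeartbeats 400000



/-- The dual (transpose) operator `T* : X* → X*`, `T* f = f ∘ T`, of a bounded operator `T`
on a normed space `X`. -/
noncomputable def dualOp {X : Type*} [NormedAddCommGroup X] [NormedSpace ℂ X]
    (T : X →L[ℂ] X) : StrongDual ℂ X →L[ℂ] StrongDual ℂ X :=
  (ContinuousLinearMap.compL ℂ X X ℂ).flip T


section Aux

-- Hahn-Banach: separate a point from a closed subspace
lemma exists_functional_of_not_mem {X : Type*} [NormedAddCommGroup X] [NormedSpace ℂ X]
    (R : Submodule ℂ X) (hR : IsClosed (R : Set X)) {x : X} (hx : x ∉ R) :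
    ∃ f : X →L[ℂ] ℂ, (∀ y ∈ R, f y = 0) ∧ f x ≠ 0 := by
  haveI : IsClosed (R : Set X) := hR
  let mkC : X →L[ℂ] (X ⧸ R) := R.mkQ.mkContinuous 1 (by
    intro y; simpa using Submodule.Quotient.norm_mk_le R y)
  have hx0 : (Submodule.Quotient.mk x : X ⧸ R) ≠ 0 := by
    simpa [Submodule.Quotient.mk_eq_zero] using hx
  obtain ⟨g, hg1, hg2⟩ := exists_dual_vector ℂ (Submodule.Quotient.mk x : X ⧸ R) (norm_ne_zero_iff.mpr hx0)
  refine ⟨g.comp mkC, fun y hy => ?_, ?_⟩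
  · have : (Submodule.Quotient.mk y : X ⧸ R) = 0 := (Submodule.Quotient.mk_eq_zero R).2 hy
    simp [mkC, Submodule.mkQ_apply, this]
  · have : g (Submodule.Quotient.mk x : X ⧸ R) ≠ 0 := by
      rw [hg2]
      simpa using hx0
    simpa [mkC] using this

lemma ker_pow_eq_ker_pow_succ_iff {X : Type*} [NormedAddCommGroup X] [NormedSpace ℂ X]
    (S : X →L[ℂ] X) {p : ℕ} (hp : 0 < p) :
    LinearMap.ker ((S ^ p : X →L[ℂ] X) : X →ₗ[ℂ] X) = LinearMap.ker ((S ^ (p + 1) : X →L[ℂ] X) : X →ₗ[ℂ] X) ↔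
      LinearMap.ker ((S ^ p : X →L[ℂ] X) : X →ₗ[ℂ] X) ⊓ LinearMap.range ((S ^ p : X →L[ℂ] X) : X →ₗ[ℂ] X) = ⊥ := by
  have pow_apply : ∀ (a b : ℕ) (x : X), (S ^ (a + b)) x = (S ^ a) ((S ^ b) x) := by
    intro a b x
    rw [pow_add, ContinuousLinearMap.mul_apply]
  have pow_succ_apply : ∀ (a : ℕ) (x : X), (S ^ (a + 1)) x = (S ^ a) (S x) := by
    intro a x
    rw [pow_succ, ContinuousLinearMap.mul_apply]
  constructor
  · intro h
    have hk : ∀ k, LinearMap.ker ((S ^ (p + k) : X →L[ℂ] X) : X →ₗ[ℂ] X) = LinearMap.ker ((S ^ p : X →L[ℂ] X) : X →ₗ[ℂ] X) := by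
      intro k
      induction k with
      | zero => rfl
      | succ k ih =>
        apply le_antisymm
        · intro x hx
          have hSx : S x ∈ LinearMap.ker ((S ^ (p + k) : X →L[ℂ] X) : X →ₗ[ℂ] X) := by
            rw [LinearMap.mem_ker, ContinuousLinearMap.coe_coe] at hx ⊢
            rw [← pow_succ_apply, show p + k + 1 = p + (k + 1) from rfl, hx]
          rw [ih] at hSx
          have hx1 : x ∈ LinearMap.ker ((S ^ (p + 1) : X →L[ℂ] X) : X →ₗ[ℂ] X) := by
            rw [LinearMap.mem_ker, ContinuousLinearMap.coe_coe] at hSx ⊢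
            rw [pow_succ_apply, hSx]
          rw [← h] at hx1
          exact hx1
        · intro x hx
          rw [LinearMap.mem_ker, ContinuousLinearMap.coe_coe] at hx ⊢
          rw [show p + (k + 1) = (k + 1) + p from by ring, pow_apply, hx, map_zero]
    rw [eq_bot_iff]
    intro x hx
    rw [Submodule.mem_inf, LinearMap.mem_ker] at hx
    obtain ⟨hxk, y, rfl⟩ := hx
    simp only [ContinuousLinearMap.coe_coe] at hxk
    have hy : y ∈ LinearMap.ker ((S ^ (p + p) : X →L[ℂ] X) : X →ₗ[ℂ] X) := by
      rw [LinearMap.mem_ker, ContinuousLinearMap.coe_coe, pow_apply, hxk]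
    rw [hk p, LinearMap.mem_ker] at hy
    rw [Submodule.mem_bot, hy]
  · intro h
    obtain ⟨q, rfl⟩ : ∃ q, p = q + 1 := ⟨p - 1, (Nat.succ_pred_eq_of_pos hp).symm⟩
    apply le_antisymm
    · intro x hx
      rw [LinearMap.mem_ker, ContinuousLinearMap.coe_coe] at hx ⊢
      rw [show q + 1 + 1 = 1 + (q + 1) from by ring, pow_apply, hx, map_zero]
    · intro x hx
      rw [LinearMap.mem_ker, ContinuousLinearMap.coe_coe] at hx ⊢
      have h1 : (S ^ (q + 1)) x ∈ LinearMap.ker ((S ^ (q + 1) : X →L[ℂ] X) : X →ₗ[ℂ] X) ⊓ LinearMap.range ((S ^ (q + 1) : X →L[ℂ] X) : X →ₗ[ℂ] X) := by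
        rw [Submodule.mem_inf]
        refine ⟨?_, ⟨x, rfl⟩⟩
        rw [LinearMap.mem_ker, ContinuousLinearMap.coe_coe, ← pow_apply,
          show q + 1 + (q + 1) = q + (q + 1 + 1) from by ring, pow_apply, hx, map_zero]
      rw [h] at h1
      exact h1

variable {X : Type*} [NormedAddCommGroup X] [NormedSpace ℂ X]

lemma dualOp_apply (T : X →L[ℂ] X) (f : StrongDual ℂ X) (x : X) :
    dualOp T f x = f (T x) := rfl

lemma dualOp_sub_smul_one (T : X →L[ℂ] X) (l : ℂ) :
    dualOp T - l • 1 = dualOp (T - l • 1) := by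
  ext f x
  simp [dualOp_apply, dualOp]

lemma dualOp_pow_apply (S : X →L[ℂ] X) (k : ℕ) (f : StrongDual ℂ X) (x : X) :
    ((dualOp S ^ k) f) x = f ((S ^ k) x) := by
  induction k generalizing f x with
  | zero => simp
  | succ k ih =>
    rw [pow_succ', ContinuousLinearMap.mul_apply, dualOp_apply, ih,
      ← ContinuousLinearMap.mul_apply, ← pow_succ]

lemma mem_ker_dualOp_pow (S : X →L[ℂ] X) (k : ℕ) (f : StrongDual ℂ X) :
    f ∈ LinearMap.ker ((dualOp S ^ k : StrongDual ℂ X →L[ℂ] StrongDual ℂ X) : StrongDual ℂ X →ₗ[ℂ] StrongDual ℂ X) ↔ ∀ x, f ((S ^ k) x) = 0 := by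
  rw [LinearMap.mem_ker, ContinuousLinearMap.coe_coe]
  constructor
  · intro h x
    rw [← dualOp_pow_apply, h]; rfl
  · intro h
    ext x
    rw [dualOp_pow_apply]
    exact h x

end Aux

/-- Let `λ` be an eigenvalue of `T`, let `(T - λI)^p` have closed range and
`0 < dim ker (T - λI)^p = n ≤ m = dim ker (T* - λI)^p < ∞`.  Then `T - λI` has ascent at
most `p` (`ker (T - λI)^p = ker (T - λI)^(p+1)`) iff the `m × n` Gram matrix `G` has full
column rank `n`. -/
theorem ascent_iff_gram_full_column_rank
    {X : Type*} [NormedAddCommGroup X] [NormedSpace ℂ X] [CompleteSpace X]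
    (T : X →L[ℂ] X) (l : ℂ) (p n m : ℕ) (hp : 0 < p) (hn : 0 < n) (hnm : n ≤ m)
    (heig : LinearMap.ker ((T - l • 1 : X →L[ℂ] X) : X →ₗ[ℂ] X) ≠ ⊥)
    (hclosed : IsClosed (LinearMap.range (((T - l • 1) ^ p : X →L[ℂ] X) : X →ₗ[ℂ] X) : Set X))
    (e : Module.Basis (Fin n) ℂ (LinearMap.ker (((T - l • 1) ^ p : X →L[ℂ] X) : X →ₗ[ℂ] X)))
    (estar : Module.Basis (Fin m) ℂ (LinearMap.ker (((dualOp T - l • 1) ^ p : StrongDual ℂ X →L[ℂ] StrongDual ℂ X) :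
      StrongDual ℂ X →ₗ[ℂ] StrongDual ℂ X)))
    (G : Matrix (Fin m) (Fin n) ℂ)
    (hG : G = Matrix.of fun j i => (estar j : StrongDual ℂ X) (e i : X)) :
    LinearMap.ker (((T - l • 1) ^ p : X →L[ℂ] X) : X →ₗ[ℂ] X) = LinearMap.ker (((T - l • 1) ^ (p + 1) : X →L[ℂ] X) : X →ₗ[ℂ] X) ↔
      G.rank = n := by
  -- every element of ker((dualOp T - l•1)^p) annihilates range (S^p)
  have hann : ∀ f ∈ LinearMap.ker (((dualOp T - l • 1) ^ p : StrongDual ℂ X →L[ℂ] StrongDual ℂ X) : StrongDual ℂ X →ₗ[ℂ] StrongDual ℂ X), ∀ x : X, f (((T - l • 1) ^ p) x) = 0 := by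
    intro f hf x
    rw [dualOp_sub_smul_one, mem_ker_dualOp_pow] at hf
    exact hf x
  -- characterization of the range via the dual basis
  have range_char : ∀ x : X, x ∈ LinearMap.range (((T - l • 1) ^ p : X →L[ℂ] X) : X →ₗ[ℂ] X) ↔
      ∀ j, (estar j : StrongDual ℂ X) x = 0 := by
    intro x
    constructor
    · rintro ⟨y, rfl⟩ j
      exact hann _ (estar j).2 y
    · intro hj
      by_contra hx
      obtain ⟨f, hf1, hf2⟩ := exists_functional_of_not_mem (LinearMap.range (((T - l • 1) ^ p : X →L[ℂ] X) : X →ₗ[ℂ] X)) hclosed hx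
      have hfmem : f ∈ LinearMap.ker (((dualOp T - l • 1) ^ p : StrongDual ℂ X →L[ℂ] StrongDual ℂ X) : StrongDual ℂ X →ₗ[ℂ] StrongDual ℂ X) := by
        rw [dualOp_sub_smul_one, mem_ker_dualOp_pow]
        intro y
        exact hf1 _ ⟨y, rfl⟩
      have hrep := estar.sum_repr ⟨f, hfmem⟩
      have : f x = 0 := by
        have hcoe := congrArg (fun (v : LinearMap.ker (((dualOp T - l • 1) ^ p : StrongDual ℂ X →L[ℂ] StrongDual ℂ X) : StrongDual ℂ X →ₗ[ℂ] StrongDual ℂ X)) =>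
          (v : StrongDual ℂ X) x) hrep
        simp only at hcoe
        rw [← hcoe]
        push_cast
        simp [ContinuousLinearMap.sum_apply, hj]
      exact hf2 this
  -- matrix-vector product formula
  have mulVec_eq : ∀ (c : Fin n → ℂ) (j : Fin m),
      G.mulVec c j = (estar j : StrongDual ℂ X) (∑ i, c i • (e i : X)) := by
    intro c j
    rw [hG]
    simp [Matrix.mulVec, dotProduct, mul_comm]
  -- rank condition
  have rank_iff : G.rank = n ↔ ∀ c : Fin n → ℂ, G.mulVec c = 0 → c = 0 := by
    have h1 : G.rank + Module.finrank ℂ (LinearMap.ker G.mulVecLin) = n := by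
      have := LinearMap.finrank_range_add_finrank_ker G.mulVecLin
      rwa [Module.finrank_fintype_fun_eq_card, Fintype.card_fin] at this
    constructor
    · intro hr c hc
      have : Module.finrank ℂ (LinearMap.ker G.mulVecLin) = 0 := by omega
      have hker : LinearMap.ker G.mulVecLin = ⊥ := Submodule.finrank_eq_zero.mp this
      have : c ∈ LinearMap.ker G.mulVecLin := by
        rw [LinearMap.mem_ker, Matrix.mulVecLin_apply, hc]
      rw [hker, Submodule.mem_bot] at this
      exact this
    · intro hinj
      have hker : LinearMap.ker G.mulVecLin = ⊥ := by
        rw [LinearMap.ker_eq_bot']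
        intro c hc
        exact hinj c (by rwa [Matrix.mulVecLin_apply] at hc)
      rw [hker] at h1
      simpa using h1
  rw [ker_pow_eq_ker_pow_succ_iff (T - l • 1) hp, rank_iff]
  constructor
  · intro hbot c hc
    set x : X := ∑ i, c i • (e i : X) with hx
    have hxK : x ∈ LinearMap.ker (((T - l • 1) ^ p : X →L[ℂ] X) : X →ₗ[ℂ] X) := by
      rw [hx]
      exact Submodule.sum_mem _ fun i _ => Submodule.smul_mem _ _ (e i).2
    have hxR : x ∈ LinearMap.range (((T - l • 1) ^ p : X →L[ℂ] X) : X →ₗ[ℂ] X) := by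
      rw [range_char]
      intro j
      rw [← mulVec_eq, hc]
      rfl
    have hx0 : x = 0 := by
      have : x ∈ LinearMap.ker (((T - l • 1) ^ p : X →L[ℂ] X) : X →ₗ[ℂ] X) ⊓ LinearMap.range (((T - l • 1) ^ p : X →L[ℂ] X) : X →ₗ[ℂ] X) :=
        Submodule.mem_inf.mpr ⟨hxK, hxR⟩
      rwa [hbot, Submodule.mem_bot] at this
    have hsum : (∑ i, c i • e i : LinearMap.ker (((T - l • 1) ^ p : X →L[ℂ] X) : X →ₗ[ℂ] X)) = 0 := by
      apply Subtype.coe_injective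
      push_cast
      rw [← hx, hx0]
    have hli := e.linearIndependent
    rw [Fintype.linearIndependent_iff] at hli
    funext i
    exact hli c hsum i
  · intro hinj
    rw [eq_bot_iff]
    intro x hx
    rw [Submodule.mem_inf] at hx
    obtain ⟨hxK, hxR⟩ := hx
    set xK : LinearMap.ker (((T - l • 1) ^ p : X →L[ℂ] X) : X →ₗ[ℂ] X) := ⟨x, hxK⟩ with hxKdef
    set c : Fin n → ℂ := fun i => e.repr xK i with hc
    have hrep : (∑ i, c i • e i : LinearMap.ker (((T - l • 1) ^ p : X →L[ℂ] X) : X →ₗ[ℂ] X)) = xK := e.sum_repr xK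
    have hcoe : (∑ i, c i • (e i : X)) = x := by
      have := congrArg (Subtype.val) hrep
      push_cast at this
      simpa using this
    have hmv : G.mulVec c = 0 := by
      funext j
      rw [mulVec_eq, hcoe]
      exact (range_char x).mp hxR j
    have hc0 : c = 0 := hinj c hmv
    rw [Submodule.mem_bot]
    rw [← hcoe, hc0]
    simp
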